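/- Let (Y, d) be a metric space, c': ℝ → Y an isometric embedding, and b > 0. Assume: (i) for all x ∈ Y, diam(π_{c'}(B(x, d(x, c'(ℝ))))) ≤ b, where π_{c'} is nonempty closest-point projection to c'(ℝ) and B(x, r) is the closed ball. Let c: ℝ → Y be another isometric embedding, O = c(0), O' = c'(0) realizing the nearest-point distance between c(ℝ) and c'(ℝ). Suppose there exist P⁺ = c(p⁺) and Q⁺ = c'(q⁺) with p⁺, q⁺ > 0 such that for all x = c(t) with t > p⁺ and all y = c'(s) with s > q⁺, d(x, y) > max{d(O, x), d(O', y)}. Then there is no sequence x_n ∈ c(ℝ) with x_n = c(t_n), t_n > p⁺, and points y_n ∈ π_{c'}(x_n) with y_n = c'(s_n), s_n > q⁺ and d(O', y_n) → ∞. -/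
import Mathlib


open Set Metric Filter

/-- The closest-point projection of `x` to the image of `c`. -/
def proj {Y : Type*} [MetricSpace Y] (c : ℝ → Y) (x : Y) : Set Y :=
  {y ∈ Set.range c | ∀ z ∈ Set.range c, dist x y ≤ dist x z}

/-- The projection of a subset to the image of `c`. -/
def projSet {Y : Type*} [MetricSpace Y] (c : ℝ → Y) (A : Set Y) : Set Y :=
  ⋃ x ∈ A, proj c x

lemma projSet_bounded {Y : Type*} [MetricSpace Y] (c' : ℝ → Y) (x : Y) (r : ℝ) (_hr : 0 ≤ r) :
    projSet c' (closedBall x r) ⊆ closedBall x (2 * r + dist x (c' 0)) := by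
  intro y hy
  simp only [projSet, Set.mem_iUnion] at hy
  obtain ⟨z, hz, hzy⟩ := hy
  obtain ⟨⟨w, rfl⟩, hmin⟩ := hzy
  have hz' : dist z x ≤ r := mem_closedBall.mp hz
  have h1 : dist z (c' w) ≤ dist z (c' 0) := hmin _ ⟨0, rfl⟩
  have h2 : dist z (c' 0) ≤ dist z x + dist x (c' 0) := dist_triangle _ _ _
  have : dist x (c' w) ≤ dist x z + dist z (c' w) := dist_triangle _ _ _
  rw [mem_closedBall, dist_comm]
  linarith [dist_comm x z]

/-- Abstract Corollary 4.4: given the contraction property for projection to `c'`, nearest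
points `O = c 0`, `O' = c' 0`, and divergence beyond `P⁺ = c(p⁺)`, `Q⁺ = c'(q⁺)`, there is
no sequence of points far out on `c` whose projections go to infinity along `c'`. -/
theorem no_unbounded_projection {Y : Type*} [MetricSpace Y]
    (c c' : ℝ → Y) (hc : Isometry c) (hc' : Isometry c')
    (hne' : ∀ x : Y, (proj c' x).Nonempty)
    (b : ℝ) (hb : 0 < b)
    (hcontr : ∀ x : Y,
      Metric.diam (projSet c' (closedBall x (Metric.infDist x (Set.range c')))) ≤ b)
    (hnearest : ∀ t u : ℝ, dist (c 0) (c' 0) ≤ dist (c t) (c' u))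
    (p q : ℝ) (hp : 0 < p) (hq : 0 < q)
    (hdiv : ∀ t > p, ∀ u > q,
      dist (c t) (c' u) > max (dist (c 0) (c t)) (dist (c' 0) (c' u))) :
    ¬ ∃ (t s : ℕ → ℝ),
        (∀ n, t n > p ∧ s n > q ∧ c' (s n) ∈ proj c' (c (t n))) ∧
        Tendsto (fun n => dist (c' 0) (c' (s n))) atTop atTop := by
  rintro ⟨t, s, hn, htend⟩
  -- Every dist (c' 0) (c' (s n)) is bounded by b, contradicting tendsto.
  have key : ∀ n, dist (c' 0) (c' (s n)) ≤ b := by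
    intro n
    obtain ⟨htp, hsq, hproj⟩ := hn n
    set x := c (t n)
    set y := c' (s n)
    have hrange : (Set.range c').Nonempty := ⟨c' 0, 0, rfl⟩
    have hinf : Metric.infDist x (Set.range c') = dist x y := by
      apply le_antisymm
      · exact Metric.infDist_le_dist_of_mem hproj.1
      · refine le_of_not_gt fun h => ?_
        obtain ⟨z, hz, hlt⟩ := (Metric.infDist_lt_iff hrange).1 h
        exact absurd (hproj.2 z hz) (not_le.mpr hlt)
    set r := Metric.infDist x (Set.range c') with hrdef
    have hr0 : 0 ≤ r := Metric.infDist_nonneg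
    -- O = c 0 is in the ball
    have hO : c 0 ∈ closedBall x r := by
      rw [mem_closedBall, hinf]
      have := hdiv (t n) htp (s n) hsq
      have h1 : dist (c 0) x ≤ dist x y := le_of_lt (lt_of_le_of_lt (le_max_left _ _) this)
      linarith [dist_comm x (c 0)]
    -- O' ∈ proj c' (c 0)
    have hO' : c' 0 ∈ proj c' (c 0) := by
      refine ⟨⟨0, rfl⟩, ?_⟩
      rintro z ⟨u, rfl⟩
      exact hnearest 0 u
    have hO'mem : c' 0 ∈ projSet c' (closedBall x r) := by
      simp only [projSet, Set.mem_iUnion]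
      exact ⟨c 0, hO, hO'⟩
    have hymem : y ∈ projSet c' (closedBall x r) := by
      simp only [projSet, Set.mem_iUnion]
      exact ⟨x, mem_closedBall_self hr0, hproj⟩
    have hbdd : Bornology.IsBounded (projSet c' (closedBall x r)) :=
      (isBounded_closedBall).subset (projSet_bounded c' x r hr0)
    calc dist (c' 0) y ≤ Metric.diam (projSet c' (closedBall x r)) :=
          dist_le_diam_of_mem hbdd hO'mem hymem
      _ ≤ b := hcontr x
  obtain ⟨n, hn'⟩ := (htend.eventually (eventually_gt_atTop b)).exists
  exact absurd (key n) (not_le.mpr hn')
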